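/- Let (X_i)_{i ≥ 1} be i.i.d. real random variables with partial sums S_n = ∑_{i=1}^n X_i, and for s > 0 let T(s) = inf{ n ≥ 1 : s + S_n ≤ 0 } (inf ∅ = ∞). Suppose there exist s₀ > 0 and λ̄ > 0 with E[e^{λ̄ T(s₀)}] < ∞. Let ξ be a nonnegative random variable independent of (X_i)_{i≥1} whose distribution has exponentially decaying tails: there exist c₀ > 0 and c₁ ∈ (0,1) with P(ξ > t) ≤ c₀ c₁^t for all t ≥ 0. Then there exists λ' > 0 such that E[ e^{λ' T(ξ)} ] < ∞, where T(ξ) = inf{ n ≥ 1 : ξ + S_n ≤ 0 }. -/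

import Mathlib

open MeasureTheory ProbabilityTheory
open scoped ENNReal Classical

/-- `exp(λ T(s))` (valued in `ℝ≥0∞`, with `e^{λ·∞} = ∞`), where
`T(s) = inf{ n ≥ 1 : s + S_n ≤ 0 }` is the first passage time below `0` of the walk
`S` started from level `s` (`T(s) = ∞` if the walk never passes below `0`). -/
noncomputable def expPassage {Ω : Type*} (lam : ℝ) (S : ℕ → Ω → ℝ) (s : ℝ)
    (ω : Ω) : ℝ≥0∞ :=
  if h : ∃ n : ℕ, 1 ≤ n ∧ s + S n ω ≤ 0
  then ENNReal.ofReal (Real.exp (lam * (Nat.find h : ℝ)))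
  else ⊤

namespace FPT

/-- The walk with increments `x 1, x 2, ...` started at `s` passes (weakly) below `0`. -/
def hits (s : ℝ) (x : ℕ → ℝ) : Prop :=
  ∃ n : ℕ, 1 ≤ n ∧ s + ∑ i ∈ Finset.range n, x (i + 1) ≤ 0

/-- Passes below `0` within the first `m` steps. -/
def hitsBy (m : ℕ) (s : ℝ) (x : ℕ → ℝ) : Prop :=
  ∃ n : ℕ, 1 ≤ n ∧ n ≤ m ∧ s + ∑ i ∈ Finset.range n, x (i + 1) ≤ 0

noncomputable def nhit (s : ℝ) (x : ℕ → ℝ) : ℕ :=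
  if h : hits s x then Nat.find h else 0

def shift (t : ℕ) (x : ℕ → ℝ) : ℕ → ℝ := fun i => x (t + i)

noncomputable def tau (s : ℝ) : ℕ → (ℕ → ℝ) → ℕ
  | 0 => fun _ => 0
  | (k+1) => fun x => tau s k x + nhit s (shift (tau s k x) x)

noncomputable def pass (lam s : ℝ) (x : ℕ → ℝ) : ℝ≥0∞ :=
  if h : hits s x then ENNReal.ofReal (Real.exp (lam * (Nat.find h : ℝ))) else ⊤

def Good (s : ℝ) (k : ℕ) (x : ℕ → ℝ) : Prop := ∀ j < k, hits s (shift (tau s j x) x)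

noncomputable def g (lam s : ℝ) (m : ℕ) (x : ℕ → ℝ) : ℝ≥0∞ :=
  if hitsBy m s x then ENNReal.ofReal (Real.exp (lam * (nhit s x : ℝ))) else 0

noncomputable def pad (m : ℕ) (v : Fin m → ℝ) : ℕ → ℝ :=
  fun i => if h : i - 1 < m ∧ 1 ≤ i then v ⟨i - 1, h.1⟩ else 0

lemma hits_of_hitsBy {m : ℕ} {s : ℝ} {x : ℕ → ℝ} (h : hitsBy m s x) : hits s x := by
  obtain ⟨n, h1, _, h2⟩ := h; exact ⟨n, h1, h2⟩

lemma nhit_one_le {s : ℝ} {x : ℕ → ℝ} (h : hits s x) : 1 ≤ nhit s x := by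
  rw [nhit, dif_pos h]; exact (Nat.find_spec h).1

lemma nhit_sum {s : ℝ} {x : ℕ → ℝ} (h : hits s x) :
    s + ∑ i ∈ Finset.range (nhit s x), x (i + 1) ≤ 0 := by
  rw [nhit, dif_pos h]; exact (Nat.find_spec h).2

lemma nhit_le {s : ℝ} {x : ℕ → ℝ} (h : hits s x) {n : ℕ}
    (hn : 1 ≤ n ∧ s + ∑ i ∈ Finset.range n, x (i + 1) ≤ 0) : nhit s x ≤ n := by
  rw [nhit, dif_pos h]; exact Nat.find_le hn

lemma nhit_min {s : ℝ} {x : ℕ → ℝ} (h : hits s x) {m : ℕ} (hm : m < nhit s x) :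
    ¬ (1 ≤ m ∧ s + ∑ i ∈ Finset.range m, x (i + 1) ≤ 0) := by
  rw [nhit, dif_pos h] at hm; exact Nat.find_min h hm

lemma hitsBy_nhit {s : ℝ} {x : ℕ → ℝ} (h : hits s x) : hitsBy (nhit s x) s x :=
  ⟨nhit s x, nhit_one_le h, le_rfl, nhit_sum h⟩

lemma nhit_le_of_hitsBy {m : ℕ} {s : ℝ} {x : ℕ → ℝ} (h : hitsBy m s x) : nhit s x ≤ m := by
  obtain ⟨n, h1, h2, h3⟩ := h
  exact le_trans (nhit_le (hits_of_hitsBy ⟨n, h1, h2, h3⟩) ⟨h1, h3⟩) h2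

end FPT

namespace FPT

lemma sum_congr_agree {x y : ℕ → ℝ} {m n : ℕ} (hnm : n ≤ m)
    (h : ∀ i, 1 ≤ i → i ≤ m → x i = y i) :
    ∑ i ∈ Finset.range n, x (i + 1) = ∑ i ∈ Finset.range n, y (i + 1) := by
  refine Finset.sum_congr rfl fun i hi => ?_
  rw [Finset.mem_range] at hi
  exact h (i+1) (by omega) (by omega)

lemma hitsBy_congr {x y : ℕ → ℝ} {m : ℕ} {s : ℝ}
    (h : ∀ i, 1 ≤ i → i ≤ m → x i = y i) : hitsBy m s x ↔ hitsBy m s y := by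
  constructor <;> rintro ⟨n, h1, h2, h3⟩ <;> refine ⟨n, h1, h2, ?_⟩
  · rwa [← sum_congr_agree h2 h]
  · rwa [sum_congr_agree h2 h]

/-- If `x` hits by time `m` and `y` agrees with `x` on coordinates `1..m`, the
first passage times agree. -/
lemma nhit_congr {x y : ℕ → ℝ} {m : ℕ} {s : ℝ} (hx : hitsBy m s x)
    (h : ∀ i, 1 ≤ i → i ≤ m → x i = y i) : nhit s x = nhit s y := by
  have hy : hitsBy m s y := (hitsBy_congr h).1 hx
  have hx' : hits s x := hits_of_hitsBy hx
  have hy' : hits s y := hits_of_hitsBy hy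
  have hxm : nhit s x ≤ m := nhit_le_of_hitsBy hx
  have hym : nhit s y ≤ m := nhit_le_of_hitsBy hy
  refine le_antisymm ?_ ?_
  · refine nhit_le hx' ⟨nhit_one_le hy', ?_⟩
    rw [sum_congr_agree hym h]; exact nhit_sum hy'
  · refine nhit_le hy' ⟨nhit_one_le hx', ?_⟩
    rw [← sum_congr_agree hxm h]; exact nhit_sum hx'

lemma g_congr {x y : ℕ → ℝ} {m : ℕ} {lam s : ℝ}
    (h : ∀ i, 1 ≤ i → i ≤ m → x i = y i) : g lam s m x = g lam s m y := by
  by_cases hx : hitsBy m s x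
  · rw [g, if_pos hx, g, if_pos ((hitsBy_congr h).1 hx), nhit_congr hx h]
  · rw [g, if_neg hx, g, if_neg (fun hy => hx ((hitsBy_congr h).2 hy))]

lemma g_mono {x : ℕ → ℝ} {lam s : ℝ} {m m' : ℕ} (hm : m ≤ m') :
    g lam s m x ≤ g lam s m' x := by
  by_cases hx : hitsBy m s x
  · obtain ⟨n, h1, h2, h3⟩ := hx
    rw [g, if_pos ⟨n, h1, h2, h3⟩, g, if_pos ⟨n, h1, le_trans h2 hm, h3⟩]
  · rw [g, if_neg hx]; exact zero_le

lemma g_le {x : ℕ → ℝ} {lam s : ℝ} {m : ℕ} :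
    g lam s m x ≤ ENNReal.ofReal (Real.exp (lam * (nhit s x : ℝ))) := by
  rw [g]; split
  · exact le_rfl
  · exact zero_le

lemma iSup_g {x : ℕ → ℝ} {lam s : ℝ} (h : hits s x) :
    ⨆ m, g lam s m x = ENNReal.ofReal (Real.exp (lam * (nhit s x : ℝ))) := by
  refine le_antisymm (iSup_le fun m => g_le) ?_
  refine le_trans (le_of_eq ?_) (le_iSup _ (nhit s x))
  rw [g, if_pos (hitsBy_nhit h)]

lemma tau_succ (s : ℝ) (k : ℕ) (x : ℕ → ℝ) :
    tau s (k+1) x = tau s k x + nhit s (shift (tau s k x) x) := rfl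

lemma shift_sum (u n : ℕ) (x : ℕ → ℝ) :
    ∑ i ∈ Finset.range n, (shift u x) (i + 1) = ∑ i ∈ Finset.range n, x (u + i + 1) := by
  refine Finset.sum_congr rfl fun i _ => ?_
  simp [shift, Nat.add_assoc]

lemma le_tau_of_good {s : ℝ} {k : ℕ} {x : ℕ → ℝ} (hG : Good s k x) : k ≤ tau s k x := by
  induction k with
  | zero => exact le_rfl
  | succ k ih =>
    have hGk : Good s k x := fun j hj => hG j (by omega)
    have h := hG k (by omega)
    rw [tau_succ]
    have := nhit_one_le h
    have := ih hGk
    omega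

lemma tau_drop {s : ℝ} {k : ℕ} {x : ℕ → ℝ} (hG : Good s k x) :
    (k : ℝ) * s + ∑ i ∈ Finset.range (tau s k x), x (i + 1) ≤ 0 := by
  induction k with
  | zero => simp [tau]
  | succ k ih =>
    have hGk : Good s k x := fun j hj => hG j (by omega)
    have h := hG k (by omega)
    have hsum := nhit_sum h
    rw [shift_sum] at hsum
    rw [tau_succ, Finset.sum_range_add]
    push_cast
    have := ih hGk
    nlinarith [hsum]

end FPT

namespace FPT

lemma tau_agree {s : ℝ} {k t : ℕ} {x y : ℕ → ℝ} (hG : Good s k x)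
    (hle : tau s k x ≤ t) (hxy : ∀ i, 1 ≤ i → i ≤ t → x i = y i) :
    tau s k y = tau s k x ∧ Good s k y := by
  induction k with
  | zero => exact ⟨rfl, fun j hj => absurd hj (by omega)⟩
  | succ k ih =>
    have hGk : Good s k x := fun j hj => hG j (by omega)
    have hstep : tau s (k+1) x = tau s k x + nhit s (shift (tau s k x) x) := rfl
    have hlek : tau s k x ≤ t := by omega
    obtain ⟨hyx, hGy⟩ := ih hGk hlek
    have hx : hits s (shift (tau s k x) x) := hG k (by omega)
    have hunt : tau s k x + nhit s (shift (tau s k x) x) ≤ t := by omega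
    have hagree : ∀ i, 1 ≤ i → i ≤ nhit s (shift (tau s k x) x) →
        shift (tau s k x) x i = shift (tau s k x) y i :=
      fun i h1 h2 => hxy (tau s k x + i) (by omega) (by omega)
    have hxBy := hitsBy_nhit hx
    have hyBy := (hitsBy_congr hagree).1 hxBy
    have hnhy : nhit s (shift (tau s k x) y) = nhit s (shift (tau s k x) x) :=
      (nhit_congr hxBy hagree).symm
    refine ⟨?_, ?_⟩
    · rw [tau_succ, hyx, hnhy, hstep]
    · intro j hj
      rcases Nat.lt_succ_iff_lt_or_eq.1 hj with hj' | hj'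
      · exact hGy j hj'
      · subst hj'
        rw [hyx]
        exact hits_of_hitsBy hyBy

/-- The set `{x | tau s k x = t ∧ Good s k x}`. -/
def Aset (s : ℝ) (k t : ℕ) : Set (ℕ → ℝ) := {x | tau s k x = t ∧ Good s k x}

lemma aset_agree {s : ℝ} {k t : ℕ} {x y : ℕ → ℝ}
    (hxy : ∀ i, 1 ≤ i → i ≤ t → x i = y i) (hx : x ∈ Aset s k t) : y ∈ Aset s k t := by
  obtain ⟨h1, h2⟩ := hx
  obtain ⟨h3, h4⟩ := tau_agree h2 (le_of_eq h1) hxy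
  exact ⟨h3.trans h1, h4⟩

lemma pad_agree {t : ℕ} {x : ℕ → ℝ} :
    ∀ i, 1 ≤ i → i ≤ t → pad t (fun j : Fin t => x ((j : ℕ) + 1)) i = x i := by
  intro i h1 h2
  have hc : i - 1 < t ∧ 1 ≤ i := ⟨by omega, h1⟩
  rw [pad, dif_pos hc]
  show x (i - 1 + 1) = x i
  congr 1
  omega

end FPT

namespace FPT

lemma measurable_walk_sum (t n : ℕ) : Measurable (fun x : ℕ → ℝ => ∑ i ∈ Finset.range n, x (t + i + 1)) :=
  Finset.measurable_sum _ (fun i _ => measurable_pi_apply _)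

lemma measurableSet_hits (s : ℝ) : MeasurableSet {x : ℕ → ℝ | hits s x} := by
  have : {x : ℕ → ℝ | hits s x} =
      ⋃ n, {x : ℕ → ℝ | 1 ≤ n ∧ s + ∑ i ∈ Finset.range n, x (i + 1) ≤ 0} := by
    ext x; simp [hits]
  rw [this]
  refine MeasurableSet.iUnion fun n => ?_
  by_cases hn : 1 ≤ n
  · have : {x : ℕ → ℝ | 1 ≤ n ∧ s + ∑ i ∈ Finset.range n, x (i + 1) ≤ 0} =
        {x : ℕ → ℝ | s + ∑ i ∈ Finset.range n, x (i + 1) ≤ 0} := by ext x; simp [hn]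
    rw [this]
    exact measurableSet_le (measurable_const.add (by simpa using measurable_walk_sum 0 n)) measurable_const
  · have : {x : ℕ → ℝ | 1 ≤ n ∧ s + ∑ i ∈ Finset.range n, x (i + 1) ≤ 0} = ∅ := by
      ext x; simp [hn]
    simp [this]

lemma measurableSet_hitsBy (m : ℕ) (s : ℝ) : MeasurableSet {x : ℕ → ℝ | hitsBy m s x} := by
  have : {x : ℕ → ℝ | hitsBy m s x} =
      ⋃ n, {x : ℕ → ℝ | (1 ≤ n ∧ n ≤ m) ∧ s + ∑ i ∈ Finset.range n, x (i + 1) ≤ 0} := by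
    ext x; simp [hitsBy]; tauto
  rw [this]
  refine MeasurableSet.iUnion fun n => ?_
  by_cases hn : 1 ≤ n ∧ n ≤ m
  · have : {x : ℕ → ℝ | (1 ≤ n ∧ n ≤ m) ∧ s + ∑ i ∈ Finset.range n, x (i + 1) ≤ 0} =
        {x : ℕ → ℝ | s + ∑ i ∈ Finset.range n, x (i + 1) ≤ 0} := by ext x; simp [hn]
    rw [this]
    exact measurableSet_le (measurable_const.add (by simpa using measurable_walk_sum 0 n)) measurable_const
  · have : {x : ℕ → ℝ | (1 ≤ n ∧ n ≤ m) ∧ s + ∑ i ∈ Finset.range n, x (i + 1) ≤ 0} = ∅ := by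
      ext x; simp [hn]
    simp [this]

lemma measurable_nhit (s : ℝ) : Measurable (nhit s) := by
  refine measurable_to_countable' fun n => ?_
  have key : nhit s ⁻¹' {n} =
      ({x : ℕ → ℝ | hits s x}ᶜ ∩ {x | (0 : ℕ) = n}) ∪
      ({x : ℕ → ℝ | 1 ≤ n ∧ s + ∑ i ∈ Finset.range n, x (i + 1) ≤ 0} ∩
       {x : ℕ → ℝ | ∀ m < n, ¬ (1 ≤ m ∧ s + ∑ i ∈ Finset.range m, x (i + 1) ≤ 0)}) := by
    ext x
    simp only [Set.mem_preimage, Set.mem_singleton_iff, Set.mem_union, Set.mem_inter_iff,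
      Set.mem_compl_iff, Set.mem_setOf_eq]
    by_cases h : hits s x
    · constructor
      · intro he
        subst he
        exact Or.inr ⟨⟨nhit_one_le h, nhit_sum h⟩, fun m hm => nhit_min h hm⟩
      · rintro (⟨hc, _⟩ | ⟨h1, h2⟩)
        · exact absurd h hc
        · exact le_antisymm (nhit_le h h1)
            (not_lt.1 fun hlt => h2 _ hlt ⟨nhit_one_le h, nhit_sum h⟩)
    · rw [nhit, dif_neg h]
      constructor
      · intro he; exact Or.inl ⟨h, he⟩
      · rintro (⟨_, he⟩ | ⟨⟨h1, h2⟩, _⟩)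
        · exact he
        · exact absurd ⟨n, h1, h2⟩ h
  rw [key]
  refine MeasurableSet.union (MeasurableSet.inter (measurableSet_hits s).compl ?_) (MeasurableSet.inter ?_ ?_)
  · by_cases h : (0 : ℕ) = n <;> simp [h]
  · by_cases hn : 1 ≤ n
    · have : {x : ℕ → ℝ | 1 ≤ n ∧ s + ∑ i ∈ Finset.range n, x (i + 1) ≤ 0} =
          {x : ℕ → ℝ | s + ∑ i ∈ Finset.range n, x (i + 1) ≤ 0} := by ext x; simp [hn]
      rw [this]
      exact measurableSet_le (measurable_const.add (by simpa using measurable_walk_sum 0 n)) measurable_const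
    · have : {x : ℕ → ℝ | 1 ≤ n ∧ s + ∑ i ∈ Finset.range n, x (i + 1) ≤ 0} = ∅ := by
        ext x; simp [hn]
      rw [this]
      exact MeasurableSet.empty
  · have : {x : ℕ → ℝ | ∀ m < n, ¬ (1 ≤ m ∧ s + ∑ i ∈ Finset.range m, x (i + 1) ≤ 0)} =
        ⋂ m ∈ Finset.range n, {x : ℕ → ℝ | ¬ (1 ≤ m ∧ s + ∑ i ∈ Finset.range m, x (i + 1) ≤ 0)} := by
      ext x; simp
    rw [this]
    refine MeasurableSet.biInter (Set.to_countable _) fun m _ => ?_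
    by_cases hm : 1 ≤ m
    · have : {x : ℕ → ℝ | ¬ (1 ≤ m ∧ s + ∑ i ∈ Finset.range m, x (i + 1) ≤ 0)} =
          {x : ℕ → ℝ | s + ∑ i ∈ Finset.range m, x (i + 1) ≤ 0}ᶜ := by ext x; simp [hm]
      rw [this]
      exact (measurableSet_le (measurable_const.add (by simpa using measurable_walk_sum 0 m)) measurable_const).compl
    · have : {x : ℕ → ℝ | ¬ (1 ≤ m ∧ s + ∑ i ∈ Finset.range m, x (i + 1) ≤ 0)} = Set.univ := by
        ext x; simp [hm]
      rw [this]
      exact MeasurableSet.univ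

lemma measurable_shift (t : ℕ) : Measurable (shift t) :=
  measurable_pi_lambda _ fun i => measurable_pi_apply _

lemma measurable_tau (s : ℝ) (k : ℕ) : Measurable (tau s k) := by
  induction k with
  | zero => exact measurable_const
  | succ k ih =>
    have h2 : Measurable fun x => nhit s (shift (tau s k x) x) := by
      refine measurable_to_countable' fun n => ?_
      have : (fun x => nhit s (shift (tau s k x) x)) ⁻¹' {n} =
          ⋃ t, ({x : ℕ → ℝ | tau s k x = t} ∩ (shift t) ⁻¹' (nhit s ⁻¹' {n})) := by
        ext x
        simp only [Set.mem_preimage, Set.mem_singleton_iff, Set.mem_iUnion, Set.mem_inter_iff,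
          Set.mem_setOf_eq]
        constructor
        · intro h; exact ⟨tau s k x, rfl, h⟩
        · rintro ⟨t, ht, h⟩; rw [ht]; exact h
      rw [this]
      exact MeasurableSet.iUnion fun t => (ih (MeasurableSet.singleton t)).inter
        ((measurable_shift t) ((measurable_nhit s) (MeasurableSet.singleton n)))
    exact ih.add h2

lemma measurable_g (lam s : ℝ) (m : ℕ) : Measurable (g lam s m) := by
  have : g lam s m = Set.indicator {x | hitsBy m s x}
      (fun x => ENNReal.ofReal (Real.exp (lam * (nhit s x : ℝ)))) := by
    ext x
    rw [g, Set.indicator]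
    split <;> simp_all
  rw [this]
  exact Measurable.indicator
    (ENNReal.measurable_ofReal.comp (Real.measurable_exp.comp
      (measurable_const.mul (measurable_from_nat.comp (measurable_nhit s)))))
    (measurableSet_hitsBy m s)

lemma measurableSet_good (s : ℝ) (k : ℕ) : MeasurableSet {x : ℕ → ℝ | Good s k x} := by
  have : {x : ℕ → ℝ | Good s k x} =
      ⋂ j ∈ Finset.range k, ⋃ t, ({x : ℕ → ℝ | tau s j x = t} ∩ (shift t) ⁻¹' {x | hits s x}) := by
    ext x
    simp only [Set.mem_setOf_eq, Set.mem_iInter, Set.mem_iUnion, Set.mem_inter_iff,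
      Set.mem_preimage, Finset.mem_range]
    constructor
    · intro h j hj; exact ⟨tau s j x, rfl, h j hj⟩
    · rintro h j hj; obtain ⟨t, ht, h'⟩ := h j hj; rw [ht]; exact h'
  rw [this]
  exact MeasurableSet.biInter (Set.to_countable _) fun j _ => MeasurableSet.iUnion fun t =>
    ((measurable_tau s j) (MeasurableSet.singleton t)).inter
      ((measurable_shift t) (measurableSet_hits s))

lemma measurableSet_aset (s : ℝ) (k t : ℕ) : MeasurableSet (Aset s k t) :=
  ((measurable_tau s k) (MeasurableSet.singleton t)).inter (measurableSet_good s k)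

lemma measurable_pad (m : ℕ) : Measurable (pad m) := by
  refine measurable_pi_lambda _ fun i => ?_
  by_cases h : i - 1 < m ∧ 1 ≤ i
  · simp only [pad, dif_pos h]
    exact measurable_pi_apply _
  · simp only [pad, dif_neg h]
    exact measurable_const

end FPT

namespace FPT
section Prob
variable {Ω : Type*} [MeasurableSpace Ω] (P : Measure Ω) [IsProbabilityMeasure P]
  (X : ℕ → Ω → ℝ)

lemma measurable_tuple (hmeas : ∀ i, Measurable (X i)) (m t : ℕ) :
    Measurable (fun ω => fun i : Fin m => X (t + (i : ℕ) + 1) ω) :=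
  measurable_pi_lambda _ fun _ => hmeas _

lemma map_tuple (hmeas : ∀ i, Measurable (X i))
    (hindep : iIndepFun X P)
    (hident : ∀ i j : ℕ, Measure.map (X i) P = Measure.map (X j) P) (m t : ℕ) :
    Measure.map (fun ω => fun i : Fin m => X (t + (i : ℕ) + 1) ω) P
      = Measure.pi (fun _ : Fin m => Measure.map (X 1) P) := by
  haveI : IsProbabilityMeasure (Measure.map (X 1) P) :=
    Measure.isProbabilityMeasure_map (hmeas 1).aemeasurable
  refine (Measure.pi_eq fun B hB => ?_).symm
  rw [Measure.map_apply (measurable_tuple X hmeas m t) (MeasurableSet.univ_pi hB)]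
  have hpre : (fun ω => fun i : Fin m => X (t + (i:ℕ) + 1) ω) ⁻¹' (Set.pi Set.univ B)
      = ⋂ i ∈ (Finset.univ : Finset (Fin m)), (X (t + (i:ℕ) + 1)) ⁻¹' (B i) := by
    ext ω; simp [Set.mem_pi]
  rw [hpre]
  set e : Fin m → ℕ := fun i => t + (i : ℕ) + 1 with he
  have hinj : Function.Injective e := fun a b hab => Fin.ext (by simp only [he] at hab; omega)
  set sets : ℕ → Set ℝ := fun j => if h : ∃ i, e i = j then B h.choose else Set.univ with hsets
  have hBe : ∀ i : Fin m, sets (e i) = B i := by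
    intro i
    have h : ∃ i', e i' = e i := ⟨i, rfl⟩
    simp only [hsets, dif_pos h]
    exact congrArg B (hinj h.choose_spec)
  have h1 : (⋂ i ∈ (Finset.univ : Finset (Fin m)), (X (e i)) ⁻¹' (B i))
      = ⋂ j ∈ Finset.univ.image e, (X j) ⁻¹' (sets j) := by
    rw [Finset.set_biInter_finset_image]
    exact Set.iInter₂_congr fun i _ => by rw [hBe]
  calc P (⋂ i ∈ (Finset.univ : Finset (Fin m)), (X (e i)) ⁻¹' (B i))
      = P (⋂ j ∈ Finset.univ.image e, (X j) ⁻¹' (sets j)) := by rw [h1]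
    _ = ∏ j ∈ Finset.univ.image e, P ((X j) ⁻¹' (sets j)) := by
        refine hindep.measure_inter_preimage_eq_mul _ fun j _ => ?_
        by_cases h : ∃ i, e i = j
        · simp only [hsets, dif_pos h]; exact hB _
        · simp only [hsets, dif_neg h]; exact MeasurableSet.univ
    _ = ∏ i : Fin m, P ((X (e i)) ⁻¹' (sets (e i))) :=
        Finset.prod_image (fun a _ b _ hab => hinj hab)
    _ = ∏ i : Fin m, (Measure.map (X 1) P) (B i) := by
        refine Finset.prod_congr rfl fun i _ => ?_
        rw [hBe i, ← Measure.map_apply (hmeas (e i)) (hB i), hident (e i) 1]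

lemma lint_tuple_shift (hmeas : ∀ i, Measurable (X i))
    (hindep : iIndepFun X P)
    (hident : ∀ i j : ℕ, Measure.map (X i) P = Measure.map (X j) P)
    (m t : ℕ) {Ψ : (Fin m → ℝ) → ℝ≥0∞} (hΨ : Measurable Ψ) :
    ∫⁻ ω, Ψ (fun i : Fin m => X (t + (i:ℕ) + 1) ω) ∂P
      = ∫⁻ ω, Ψ (fun i : Fin m => X (0 + (i:ℕ) + 1) ω) ∂P := by
  rw [← lintegral_map hΨ (measurable_tuple X hmeas m t),
      ← lintegral_map hΨ (measurable_tuple X hmeas m 0),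
      map_tuple P X hmeas hindep hident m t, map_tuple P X hmeas hindep hident m 0]

lemma lint_block_mul (hmeas : ∀ i, Measurable (X i))
    (hindep : iIndepFun X P)
    (t m : ℕ) {φ : (Fin t → ℝ) → ℝ≥0∞} {ψ : (Fin m → ℝ) → ℝ≥0∞}
    (hφ : Measurable φ) (hψ : Measurable ψ) :
    ∫⁻ ω, φ (fun i : Fin t => X ((i:ℕ) + 1) ω) * ψ (fun i : Fin m => X (t + (i:ℕ) + 1) ω) ∂P
      = (∫⁻ ω, φ (fun i : Fin t => X ((i:ℕ) + 1) ω) ∂P) *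
        ∫⁻ ω, ψ (fun i : Fin m => X (t + (i:ℕ) + 1) ω) ∂P := by
  have hd : Disjoint (Finset.Icc 1 t) (Finset.Icc (t+1) (t+m)) := by
    rw [Finset.disjoint_left]; intro a ha hb
    rw [Finset.mem_Icc] at ha hb; omega
  have hbase := hindep.indepFun_finset (Finset.Icc 1 t) (Finset.Icc (t+1) (t+m)) hd hmeas
  have hm₁ : Measurable fun w : ((Finset.Icc 1 t : Finset ℕ) → ℝ) =>
      φ (fun i : Fin t => w ⟨(i:ℕ) + 1, by rw [Finset.mem_Icc]; omega⟩) :=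
    hφ.comp (measurable_pi_lambda _ fun _ => measurable_pi_apply _)
  have hm₂ : Measurable fun w : ((Finset.Icc (t+1) (t+m) : Finset ℕ) → ℝ) =>
      ψ (fun i : Fin m => w ⟨t + (i:ℕ) + 1, by rw [Finset.mem_Icc]; omega⟩) :=
    hψ.comp (measurable_pi_lambda _ fun _ => measurable_pi_apply _)
  have hI : IndepFun (fun ω => φ (fun i : Fin t => X ((i:ℕ)+1) ω))
      (fun ω => ψ (fun i : Fin m => X (t+(i:ℕ)+1) ω)) P := hbase.comp hm₁ hm₂
  exact lintegral_mul_eq_lintegral_mul_lintegral_of_indepFun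
    (hφ.comp (measurable_pi_lambda _ fun _ => hmeas _))
    (hψ.comp (measurable_pi_lambda _ fun _ => hmeas _)) hI

end Prob
end FPT

namespace FPT

lemma shift_zero (x : ℕ → ℝ) : shift 0 x = x := funext fun i => by simp [shift]

lemma hitsBy_mono {m m' : ℕ} {s : ℝ} {x : ℕ → ℝ} (h : m ≤ m') (hx : hitsBy m s x) :
    hitsBy m' s x := by
  obtain ⟨n, h1, h2, h3⟩ := hx; exact ⟨n, h1, le_trans h2 h, h3⟩

lemma hits_iff_hitsBy {s : ℝ} {x : ℕ → ℝ} : hits s x ↔ ∃ m, hitsBy m s x := by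
  constructor
  · rintro ⟨n, h1, h2⟩; exact ⟨n, n, h1, le_rfl, h2⟩
  · rintro ⟨m, h⟩; exact hits_of_hitsBy h

lemma shift_tuple_agree (t m : ℕ) (x : ℕ → ℝ) :
    ∀ i, 1 ≤ i → i ≤ m → shift t x i = pad m (fun j : Fin m => x (t + (j : ℕ) + 1)) i := by
  intro i h1 h2
  have hc : i - 1 < m ∧ 1 ≤ i := ⟨by omega, h1⟩
  rw [pad, dif_pos hc]
  show x (t + i) = x (t + (i - 1) + 1)
  congr 1
  omega

section Prob
variable {Ω : Type*} [MeasurableSpace Ω] (P : Measure Ω) [IsProbabilityMeasure P]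
  (X : ℕ → Ω → ℝ)

lemma measurable_shiftZ (hmeas : ∀ i, Measurable (X i)) (t : ℕ) :
    Measurable (fun ω => shift t (fun i => X i ω)) :=
  measurable_pi_lambda _ fun _ => hmeas _

lemma prob_hitsBy_shift (hmeas : ∀ i, Measurable (X i))
    (hindep : iIndepFun X P)
    (hident : ∀ i j : ℕ, Measure.map (X i) P = Measure.map (X j) P) (s : ℝ) (m t : ℕ) :
    P {ω | hitsBy m s (shift t (fun i => X i ω))}
      = P {ω | hitsBy m s (fun i => X i ω)} := by
  set D : Set (Fin m → ℝ) := {v | hitsBy m s (pad m v)} with hD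
  have hDm : MeasurableSet D := measurable_pad m (measurableSet_hitsBy m s)
  have h1 : ∀ t', {ω | hitsBy m s (shift t' (fun i => X i ω))}
      = (fun ω => fun i : Fin m => X (t' + (i:ℕ) + 1) ω) ⁻¹' D := by
    intro t'; ext ω
    simp only [Set.mem_setOf_eq, Set.mem_preimage, hD]
    exact hitsBy_congr (shift_tuple_agree t' m (fun i => X i ω))
  have h2 : {ω | hitsBy m s (fun i => X i ω)}
      = (fun ω => fun i : Fin m => X (0 + (i:ℕ) + 1) ω) ⁻¹' D := by
    rw [← h1 0]
    ext ω
    rw [Set.mem_setOf_eq, Set.mem_setOf_eq, shift_zero]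
  rw [h1 t, h2, ← Measure.map_apply (measurable_tuple X hmeas m t) hDm,
    ← Measure.map_apply (measurable_tuple X hmeas m 0) hDm,
    map_tuple P X hmeas hindep hident m t, map_tuple P X hmeas hindep hident m 0]

lemma prob_hits_shift (hmeas : ∀ i, Measurable (X i))
    (hindep : iIndepFun X P)
    (hident : ∀ i j : ℕ, Measure.map (X i) P = Measure.map (X j) P) (s : ℝ) (t : ℕ) :
    P {ω | hits s (shift t (fun i => X i ω))} = P {ω | hits s (fun i => X i ω)} := by
  have hU : ∀ t', {ω | hits s (shift t' (fun i => X i ω))}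
      = ⋃ m, {ω | hitsBy m s (shift t' (fun i => X i ω))} := by
    intro t'; ext ω
    simp only [Set.mem_setOf_eq, Set.mem_iUnion]
    exact hits_iff_hitsBy
  have hU0 : {ω | hits s (fun i => X i ω)} = ⋃ m, {ω | hitsBy m s (fun i => X i ω)} := by
    ext ω
    simp only [Set.mem_setOf_eq, Set.mem_iUnion]
    exact hits_iff_hitsBy
  have hdir : ∀ t', Directed (· ⊆ ·) (fun m => {ω | hitsBy m s (shift t' (fun i => X i ω))}) := by
    intro t' m m'
    exact ⟨max m m', fun ω hω => hitsBy_mono (le_max_left _ _) hω,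
      fun ω hω => hitsBy_mono (le_max_right _ _) hω⟩
  have hdir0 : Directed (· ⊆ ·) (fun m => {ω | hitsBy m s (fun i => X i ω)}) := by
    intro m m'
    refine ⟨max m m', fun ω hω => ?_, fun ω hω => ?_⟩ <;>
    · simp only [Set.mem_setOf_eq] at hω ⊢
      exact hitsBy_mono (by omega) hω
  rw [hU t, hU0, Directed.measure_iUnion (hdir t), Directed.measure_iUnion hdir0]
  exact iSup_congr fun m => prob_hitsBy_shift P X hmeas hindep hident s m t

lemma measurableSet_hitsZ (hmeas : ∀ i, Measurable (X i)) (s : ℝ) (t : ℕ) :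
    MeasurableSet {ω | hits s (shift t (fun i => X i ω))} :=
  measurable_shiftZ X hmeas t (measurableSet_hits s)

lemma hits_null (hmeas : ∀ i, Measurable (X i))
    (hindep : iIndepFun X P)
    (hident : ∀ i j : ℕ, Measure.map (X i) P = Measure.map (X j) P) (s : ℝ)
    (hfull : P {ω | hits s (fun i => X i ω)} = 1) (t : ℕ) :
    P {ω | ¬ hits s (shift t (fun i => X i ω))} = 0 := by
  have h1 : {ω | ¬ hits s (shift t (fun i => X i ω))}
      = {ω | hits s (shift t (fun i => X i ω))}ᶜ := rfl
  rw [h1, measure_compl (measurableSet_hitsZ X hmeas s t) (measure_ne_top _ _),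
    prob_hits_shift P X hmeas hindep hident s t, hfull, measure_univ]
  simp

lemma good_null (hmeas : ∀ i, Measurable (X i))
    (hindep : iIndepFun X P)
    (hident : ∀ i j : ℕ, Measure.map (X i) P = Measure.map (X j) P) (s : ℝ)
    (hfull : P {ω | hits s (fun i => X i ω)} = 1) (k : ℕ) :
    P {ω | ¬ Good s k (fun i => X i ω)} = 0 := by
  have hsub : {ω : Ω | ¬ Good s k (fun i => X i ω)} ⊆ ⋃ (j : ℕ) (t : ℕ),
      ({ω : Ω | tau s j (fun i => X i ω) = t} ∩ {ω | ¬ hits s (shift t (fun i => X i ω))}) := by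
    intro ω hω
    rw [Set.mem_setOf_eq, Good] at hω
    push_neg at hω
    obtain ⟨j, _, hj⟩ := hω
    exact Set.mem_iUnion.2 ⟨j, Set.mem_iUnion.2 ⟨tau s j (fun i => X i ω), rfl, hj⟩⟩
  have hnull : P (⋃ (j : ℕ) (t : ℕ),
      ({ω : Ω | tau s j (fun i => X i ω) = t} ∩ {ω | ¬ hits s (shift t (fun i => X i ω))})) = 0 :=
    measure_iUnion_null fun j => measure_iUnion_null fun t =>
      measure_mono_null Set.inter_subset_right (hits_null P X hmeas hindep hident s hfull t)
  exact measure_mono_null hsub hnull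

end Prob
end FPT

namespace FPT
section Prob
variable {Ω : Type*} [MeasurableSpace Ω] (P : Measure Ω) [IsProbabilityMeasure P]
  (X : ℕ → Ω → ℝ)

lemma rec_step (hmeas : ∀ i, Measurable (X i))
    (hindep : iIndepFun X P)
    (hident : ∀ i j : ℕ, Measure.map (X i) P = Measure.map (X j) P)
    (s lam : ℝ)
    (hfull : P {ω | hits s (fun i => X i ω)} = 1) (k : ℕ) :
    ∫⁻ ω, ENNReal.ofReal (Real.exp (lam * (tau s (k+1) (fun i => X i ω) : ℝ))) ∂P
      ≤ (∫⁻ ω, ENNReal.ofReal (Real.exp (lam * (tau s k (fun i => X i ω) : ℝ))) ∂P) *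
        ∫⁻ ω, ENNReal.ofReal (Real.exp (lam * (nhit s (fun i => X i ω) : ℝ))) ∂P := by
  have hmZ : Measurable (fun ω => (fun i => X i ω)) := measurable_pi_lambda _ hmeas
  set ρ := ∫⁻ ω, ENNReal.ofReal (Real.exp (lam * (nhit s (fun i => X i ω) : ℝ))) ∂P with hρ
  set F : ℕ → Ω → ℝ≥0∞ :=
    fun j ω => ENNReal.ofReal (Real.exp (lam * (tau s j (fun i => X i ω) : ℝ))) with hF
  have hmF : ∀ j, Measurable (F j) := fun j =>
    ENNReal.measurable_ofReal.comp (Real.measurable_exp.comp (measurable_const.mul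
      (measurable_from_nat.comp ((measurable_tau s j).comp hmZ))))
  show ∫⁻ ω, F (k+1) ω ∂P ≤ (∫⁻ ω, F k ω ∂P) * ρ
  set A : ℕ → Set Ω := fun t => (fun ω => (fun i => X i ω)) ⁻¹' Aset s k t with hA
  have hAm : ∀ t, MeasurableSet (A t) := fun t => hmZ (measurableSet_aset s k t)
  have hAdis : Pairwise (Function.onFun Disjoint A) := by
    intro t t' htt'
    rw [Function.onFun, Set.disjoint_left]
    intro ω hω hω'
    exact htt' ((hω.1).symm.trans hω'.1)
  have hGm : MeasurableSet {ω : Ω | Good s k (fun i => X i ω)} := hmZ (measurableSet_good s k)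
  have hAU : (⋃ t, A t) = {ω : Ω | Good s k (fun i => X i ω)} := by
    ext ω
    simp only [Set.mem_iUnion, hA, Set.mem_preimage, Aset, Set.mem_setOf_eq]
    constructor
    · rintro ⟨t, _, h2⟩; exact h2
    · intro h; exact ⟨tau s k (fun i => X i ω), rfl, h⟩
  have hGc : P {ω : Ω | Good s k (fun i => X i ω)}ᶜ = 0 :=
    good_null P X hmeas hindep hident s hfull k
  -- decompose both integrals over the A t
  have hdecomp : ∀ j, ∫⁻ ω, F j ω ∂P = ∑' t, ∫⁻ ω in A t, F j ω ∂P := by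
    intro j
    rw [← lintegral_add_compl (F j) hGm, setLIntegral_measure_zero _ _ hGc, add_zero,
      ← hAU, lintegral_iUnion hAm hAdis]
  -- key estimate per t
  have hkey : ∀ t : ℕ, ∫⁻ ω in A t, F (k+1) ω ∂P ≤ (∫⁻ ω in A t, F k ω ∂P) * ρ := by
    intro t
    set c : ℝ≥0∞ := ENNReal.ofReal (Real.exp (lam * (t : ℝ))) with hc
    have hFt : ∫⁻ ω in A t, F k ω ∂P = c * P (A t) := by
      rw [setLIntegral_congr_fun (hAm t) (fun ω hω => ?_), setLIntegral_const]
      have : tau s k (fun i => X i ω) = t := hω.1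
      rw [hF]
      simp only [this]
      rfl
    -- the shifted-increment exponential
    set H : Ω → ℝ≥0∞ :=
      fun ω => ENNReal.ofReal (Real.exp (lam * (nhit s (shift t (fun i => X i ω)) : ℝ))) with hH
    set G : ℕ → Ω → ℝ≥0∞ := fun m ω => g lam s m (shift t (fun i => X i ω)) with hG
    have hmG : ∀ m, Measurable (G m) := fun m =>
      (measurable_g lam s m).comp (measurable_shiftZ X hmeas t)
    set ind : Ω → ℝ≥0∞ := fun ω => (A t).indicator (fun _ => c) ω with hind
    have hmind : Measurable ind := measurable_const.indicator (hAm t)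
    have step1 : ∫⁻ ω in A t, F (k+1) ω ∂P = ∫⁻ ω in A t, c * H ω ∂P := by
      refine setLIntegral_congr_fun (hAm t) (fun ω hω => ?_)
      have h1 : tau s k (fun i => X i ω) = t := hω.1
      have h2 : tau s (k+1) (fun i => X i ω)
          = t + nhit s (shift t (fun i => X i ω)) := by rw [tau_succ, h1]
      rw [hF]
      simp only [h2]
      rw [hH, hc]
      push_cast
      rw [mul_add, Real.exp_add, ENNReal.ofReal_mul (Real.exp_nonneg _)]
    have step2 : ∫⁻ ω in A t, c * H ω ∂P = ∫⁻ ω, ind ω * H ω ∂P := by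
      rw [← lintegral_indicator (hAm t)]
      congr 1
      ext ω
      by_cases hω : ω ∈ A t <;> simp [hind, hω]
    have hae : ∀ᵐ ω ∂P, hits s (shift t (fun i => X i ω)) := by
      have := hits_null P X hmeas hindep hident s hfull t
      rwa [← ae_iff] at this
      
    have step3 : ∫⁻ ω, ind ω * H ω ∂P = ∫⁻ ω, ⨆ m, ind ω * G m ω ∂P := by
      refine lintegral_congr_ae ?_
      filter_upwards [hae] with ω hω
      rw [← ENNReal.mul_iSup]
      congr 1
      rw [hG, hH]
      simp only []
      exact (iSup_g (lam := lam) hω).symm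
    have step4 : ∫⁻ ω, ⨆ m, ind ω * G m ω ∂P = ⨆ m, ∫⁻ ω, ind ω * G m ω ∂P := by
      refine lintegral_iSup (fun m => hmind.mul (hmG m)) ?_
      intro m m' hmm' ω
      exact mul_le_mul_right (g_mono hmm') _
    have step5 : ∀ m, ∫⁻ ω, ind ω * G m ω ∂P ≤ (c * P (A t)) * ρ := by
      intro m
      set φ : (Fin t → ℝ) → ℝ≥0∞ :=
        fun v => (Aset s k t).indicator (fun _ => c) (pad t v) with hφ
      set ψ : (Fin m → ℝ) → ℝ≥0∞ := fun v => g lam s m (pad m v) with hψ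
      have hmφ : Measurable φ := (measurable_const.indicator (measurableSet_aset s k t)).comp
        (measurable_pad t)
      have hmψ : Measurable ψ := (measurable_g lam s m).comp (measurable_pad m)
      have hφeq : ∀ ω, φ (fun i : Fin t => X ((i:ℕ) + 1) ω) = ind ω := by
        intro ω
        have hmemiff : pad t (fun j : Fin t => X ((j:ℕ) + 1) ω) ∈ Aset s k t
            ↔ (fun i => X i ω) ∈ Aset s k t := by
          constructor
          · intro h
            exact aset_agree (fun i h1 h2 => pad_agree (x := fun i => X i ω) i h1 h2) h
          · intro h
            exact aset_agree (fun i h1 h2 => (pad_agree (x := fun i => X i ω) i h1 h2).symm) h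
        rw [hφ, hind]
        simp only [Set.indicator, hA, Set.mem_preimage]
        rw [if_congr hmemiff rfl rfl]
      have hψeq : ∀ ω, ψ (fun i : Fin m => X (t + (i:ℕ) + 1) ω) = G m ω := by
        intro ω
        rw [hψ, hG]
        exact (g_congr (shift_tuple_agree t m (fun i => X i ω))).symm
      have hint : ∫⁻ ω, ind ω * G m ω ∂P
          = (∫⁻ ω, φ (fun i : Fin t => X ((i:ℕ) + 1) ω) ∂P) *
            ∫⁻ ω, ψ (fun i : Fin m => X (t + (i:ℕ) + 1) ω) ∂P := by
        rw [← lint_block_mul P X hmeas hindep t m hmφ hmψ]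
        refine lintegral_congr fun ω => ?_
        rw [hφeq ω, hψeq ω]
      have h1 : ∫⁻ ω, φ (fun i : Fin t => X ((i:ℕ) + 1) ω) ∂P = c * P (A t) := by
        have := lintegral_indicator_const (μ := P) (hAm t) c
        rw [← this]
        refine lintegral_congr fun ω => ?_
        rw [hφeq ω, hind]
      have h2 : ∫⁻ ω, ψ (fun i : Fin m => X (t + (i:ℕ) + 1) ω) ∂P ≤ ρ := by
        rw [lint_tuple_shift P X hmeas hindep hident m t hmψ, hρ]
        refine lintegral_mono fun ω => ?_
        have hagree0 : ∀ i, 1 ≤ i → i ≤ m →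
            (fun i => X i ω) i = pad m (fun j : Fin m => X (0 + (j:ℕ) + 1) ω) i := by
          intro i hi1 hi2
          have : (fun j : Fin m => X (0 + (j:ℕ) + 1) ω)
              = fun j : Fin m => (fun i => X i ω) ((j:ℕ) + 1) := by
            funext j
            simp
          rw [this]
          exact (pad_agree (x := fun i => X i ω) i hi1 hi2).symm
        show g lam s m (pad m fun i : Fin m => X (0 + (i:ℕ) + 1) ω)
            ≤ ENNReal.ofReal (Real.exp (lam * (nhit s (fun i => X i ω) : ℝ)))
        rw [← g_congr hagree0]
        exact g_le
      exact hint.trans_le (mul_le_mul' h1.le h2)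
    rw [step1, step2, step3, step4, hFt]
    exact iSup_le step5
  calc ∫⁻ ω, F (k+1) ω ∂P = ∑' t, ∫⁻ ω in A t, F (k+1) ω ∂P := hdecomp (k+1)
    _ ≤ ∑' t, (∫⁻ ω in A t, F k ω ∂P) * ρ := ENNReal.tsum_le_tsum hkey
    _ = (∑' t, ∫⁻ ω in A t, F k ω ∂P) * ρ := ENNReal.tsum_mul_right
    _ = (∫⁻ ω, F k ω ∂P) * ρ := by rw [← hdecomp k]

end Prob
end FPT

namespace FPT
section Prob
variable {Ω : Type*} [MeasurableSpace Ω] (P : Measure Ω) [IsProbabilityMeasure P]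
  (X : ℕ → Ω → ℝ)

lemma tau_pow_bound (hmeas : ∀ i, Measurable (X i))
    (hindep : iIndepFun X P)
    (hident : ∀ i j : ℕ, Measure.map (X i) P = Measure.map (X j) P)
    (s lam : ℝ)
    (hfull : P {ω | hits s (fun i => X i ω)} = 1) (k : ℕ) :
    ∫⁻ ω, ENNReal.ofReal (Real.exp (lam * (tau s k (fun i => X i ω) : ℝ))) ∂P
      ≤ (∫⁻ ω, ENNReal.ofReal (Real.exp (lam * (nhit s (fun i => X i ω) : ℝ))) ∂P) ^ k := by
  induction k with
  | zero =>
    have : ∀ ω : Ω, ENNReal.ofReal (Real.exp (lam * (tau s 0 (fun i => X i ω) : ℝ))) = 1 := by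
      intro ω
      show ENNReal.ofReal (Real.exp (lam * ((0:ℕ) : ℝ))) = 1
      norm_num
    rw [lintegral_congr this]
    simp
  | succ k ih =>
    calc ∫⁻ ω, ENNReal.ofReal (Real.exp (lam * (tau s (k+1) (fun i => X i ω) : ℝ))) ∂P
        ≤ (∫⁻ ω, ENNReal.ofReal (Real.exp (lam * (tau s k (fun i => X i ω) : ℝ))) ∂P) *
          ∫⁻ ω, ENNReal.ofReal (Real.exp (lam * (nhit s (fun i => X i ω) : ℝ))) ∂P :=
          rec_step P X hmeas hindep hident s lam hfull k
      _ ≤ (∫⁻ ω, ENNReal.ofReal (Real.exp (lam * (nhit s (fun i => X i ω) : ℝ))) ∂P) ^ k *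
          ∫⁻ ω, ENNReal.ofReal (Real.exp (lam * (nhit s (fun i => X i ω) : ℝ))) ∂P :=
          mul_le_mul_left ih _
      _ = _ := (pow_succ _ _).symm

lemma pass_eq (lam s : ℝ) (ω : Ω) :
    expPassage lam (fun n ω => ∑ i ∈ Finset.range n, X (i + 1) ω) s ω
      = pass lam s (fun i => X i ω) := rfl

lemma hfull_of_mom (hmeas : ∀ i, Measurable (X i)) {lam s : ℝ}
    (hmom : ∫⁻ ω, pass lam s (fun i => X i ω) ∂P < ⊤) :
    P {ω | hits s (fun i => X i ω)} = 1 := by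
  have hmZ : Measurable (fun ω => (fun i => X i ω)) := measurable_pi_lambda _ hmeas
  have hms : MeasurableSet {ω : Ω | hits s (fun i => X i ω)} := hmZ (measurableSet_hits s)
  by_contra hne
  have hpos : P {ω : Ω | hits s (fun i => X i ω)}ᶜ ≠ 0 := by
    intro h0
    exact hne ((prob_compl_eq_zero_iff hms).1 h0)
  have : (⊤ : ℝ≥0∞) ≤ ∫⁻ ω, pass lam s (fun i => X i ω) ∂P := by
    calc (⊤ : ℝ≥0∞) = ⊤ * P {ω : Ω | hits s (fun i => X i ω)}ᶜ := by
          rw [ENNReal.top_mul hpos]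
      _ = ∫⁻ _ in {ω : Ω | hits s (fun i => X i ω)}ᶜ, ⊤ ∂P := (setLIntegral_const _ _).symm
      _ = ∫⁻ ω in {ω : Ω | hits s (fun i => X i ω)}ᶜ, pass lam s (fun i => X i ω) ∂P := by
          refine setLIntegral_congr_fun hms.compl (fun ω hω => ?_)
          rw [pass, dif_neg (show ¬ hits s (fun i => X i ω) from fun hh => hω hh)]
      _ ≤ ∫⁻ ω, pass lam s (fun i => X i ω) ∂P := setLIntegral_le_lintegral _ _
  exact absurd (lt_of_le_of_lt this hmom) (by simp)

lemma rho_le_mom {lam s : ℝ} :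
    ∫⁻ ω, ENNReal.ofReal (Real.exp (lam * (nhit s (fun i => X i ω) : ℝ))) ∂P
      ≤ ∫⁻ ω, pass lam s (fun i => X i ω) ∂P := by
  refine lintegral_mono fun ω => ?_
  rw [pass, nhit]
  by_cases h : hits s (fun i => X i ω)
  · rw [dif_pos h, dif_pos h]
  · rw [dif_neg h, dif_neg h]
    exact le_top

end Prob
end FPT


set_option maxHeartbeats 2000000 in
open FPT in
theorem first_passage_time_exp_moment_random_start
    {Ω : Type*} [MeasurableSpace Ω] (P : Measure Ω) [IsProbabilityMeasure P]
    (X : ℕ → Ω → ℝ) (hmeas : ∀ i, Measurable (X i))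
    (hindep : iIndepFun X P)
    (hident : ∀ i j : ℕ, Measure.map (X i) P = Measure.map (X j) P)
    (s₀ : ℝ) (hs₀ : 0 < s₀) (lambar : ℝ) (hlambar : 0 < lambar)
    (hmom : ∫⁻ ω, expPassage lambar
        (fun n ω => ∑ i ∈ Finset.range n, X (i + 1) ω) s₀ ω ∂P < ⊤)
    (ξ : Ω → ℝ) (hξmeas : Measurable ξ) (hξnonneg : ∀ ω, 0 ≤ ξ ω)
    (hξindep : IndepFun ξ (fun ω => fun i => X i ω) P)
    (c₀ c₁ : ℝ) (hc₀ : 0 < c₀) (hc₁ : c₁ ∈ Set.Ioo (0:ℝ) 1)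
    (htail : ∀ t : ℝ, 0 ≤ t → P {ω | t < ξ ω} ≤ ENNReal.ofReal (c₀ * c₁ ^ t)) :
    ∃ lam' : ℝ, 0 < lam' ∧
      ∫⁻ ω, expPassage lam'
        (fun n ω => ∑ i ∈ Finset.range n, X (i + 1) ω) (ξ ω) ω ∂P < ⊤ := by
  have hmZ : Measurable (fun ω => (fun i => X i ω)) := measurable_pi_lambda _ hmeas
  have hmomP : ∫⁻ ω, pass lambar s₀ (fun i => X i ω) ∂P < ⊤ := by
    have hrw : (∫⁻ ω, expPassage lambar (fun n ω => ∑ i ∈ Finset.range n, X (i + 1) ω) s₀ ω ∂P)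
        = ∫⁻ ω, pass lambar s₀ (fun i => X i ω) ∂P := lintegral_congr fun ω => rfl
    rwa [hrw] at hmom
  have hfull : P {ω | hits s₀ (fun i => X i ω)} = 1 := hfull_of_mom P X hmeas hmomP
  -- the fixed-level mgf at `lambar`
  set ρbar := ∫⁻ ω, ENNReal.ofReal (Real.exp (lambar * (nhit s₀ (fun i => X i ω) : ℝ))) ∂P
    with hρbar
  have hρbar_lt : ρbar < ⊤ := lt_of_le_of_lt (rho_le_mom P X) hmomP
  have hρbar_ge1 : 1 ≤ ρbar := by
    have h1 : ∀ ω : Ω, (1:ℝ≥0∞) ≤ ENNReal.ofReal (Real.exp (lambar * (nhit s₀ (fun i => X i ω) : ℝ))) := by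
      intro ω
      rw [← ENNReal.ofReal_one]
      exact ENNReal.ofReal_le_ofReal (Real.one_le_exp (by positivity))
    calc (1:ℝ≥0∞) = ∫⁻ _, 1 ∂P := by simp
      _ ≤ ρbar := lintegral_mono h1
  set M := ρbar.toReal with hMdef
  have hM1 : 1 ≤ M := by
    have := ENNReal.toReal_mono hρbar_lt.ne hρbar_ge1
    simpa using this
  have hM0 : 0 < M := lt_of_lt_of_le one_pos hM1
  have hρbar_eq : ρbar = ENNReal.ofReal M := (ENNReal.ofReal_toReal hρbar_lt.ne).symm
  -- geometric decay parameters
  set β : ℝ := c₁ ^ (s₀ : ℝ) with hβdef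
  have hβ0 : 0 < β := Real.rpow_pos_of_pos hc₁.1 _
  have hβ1 : β < 1 := Real.rpow_lt_one hc₁.1.le hc₁.2 hs₀
  have hβinv : 1 < β⁻¹ := by
    have h := mul_inv_cancel₀ hβ0.ne'
    nlinarith [inv_pos.2 hβ0]
  set δ : ℝ := (β⁻¹ - 1)/2 with hδdef
  have hδ : 0 < δ := by rw [hδdef]; linarith
  have hq : β * (1 + δ) < 1 := by
    have h := mul_inv_cancel₀ hβ0.ne'
    rw [hδdef]
    nlinarith
  -- choose lam'
  set K : ℝ := max 1 ((2/lambar) * Real.log (2*M/δ)) with hKdef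
  have hK : 0 < K := lt_of_lt_of_le one_pos (le_max_left _ _)
  set lam' : ℝ := min (lambar/2) (Real.log (1 + δ/2) / K) with hlamdef
  have hlam' : 0 < lam' :=
    lt_min (by positivity) (div_pos (Real.log_pos (by linarith)) hK)
  refine ⟨lam', hlam', ?_⟩
  -- mgf bound at lam'
  have hexpK : Real.exp (lam' * K) ≤ 1 + δ/2 := by
    have h1 : lam' * K ≤ Real.log (1 + δ/2) := by
      have h2 : lam' ≤ Real.log (1+δ/2)/K := min_le_right _ _
      calc lam' * K ≤ (Real.log (1+δ/2)/K) * K := mul_le_mul_of_nonneg_right h2 hK.le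
        _ = Real.log (1+δ/2) := div_mul_cancel₀ _ hK.ne'
    calc Real.exp (lam' * K) ≤ Real.exp (Real.log (1+δ/2)) := Real.exp_le_exp.2 h1
      _ = 1 + δ/2 := Real.exp_log (by linarith)
  have hexpK2 : M * Real.exp ((lam' - lambar) * K) ≤ δ/2 := by
    have h2 : (lam' - lambar) * K ≤ -(lambar/2) * K := by
      have h3 : lam' ≤ lambar/2 := min_le_left _ _
      nlinarith
    have h3 : -(lambar/2) * K ≤ -(lambar/2) * ((2/lambar) * Real.log (2*M/δ)) := by
      have h4 : (2/lambar) * Real.log (2*M/δ) ≤ K := by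
        rw [hKdef]; exact le_max_right _ _
      exact mul_le_mul_of_nonpos_left h4 (by linarith)
    have h4 : -(lambar/2) * ((2/lambar) * Real.log (2*M/δ)) = - Real.log (2*M/δ) := by
      field_simp
    have h5 : Real.exp ((lam'-lambar)*K) ≤ Real.exp (-Real.log (2*M/δ)) :=
      Real.exp_le_exp.2 (by linarith)
    have h6 : Real.exp (-Real.log (2*M/δ)) = (2*M/δ)⁻¹ := by
      rw [Real.exp_neg, Real.exp_log (by positivity)]
    have h7 : M * (2*M/δ)⁻¹ = δ/2 := by
      field_simp
    calc M * Real.exp ((lam' - lambar) * K) ≤ M * (2*M/δ)⁻¹ :=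
          mul_le_mul_of_nonneg_left (h5.trans_eq h6) hM0.le
      _ = δ/2 := h7
  have hpoint : ∀ (n : ℕ), Real.exp (lam' * n)
      ≤ Real.exp (lam' * K) + Real.exp ((lam' - lambar) * K) * Real.exp (lambar * n) := by
    intro n
    by_cases hn : (n:ℝ) ≤ K
    · have h1 : Real.exp (lam' * n) ≤ Real.exp (lam' * K) :=
        Real.exp_le_exp.2 (mul_le_mul_of_nonneg_left hn hlam'.le)
      nlinarith [Real.exp_pos (lambar * (n:ℝ)), Real.exp_pos ((lam'-lambar)*K)]
    · push_neg at hn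
      have hle : lam' - lambar ≤ 0 := by
        have := min_le_left (lambar/2) (Real.log (1 + δ/2) / K)
        rw [hlamdef]
        linarith [this]
      have h7 : (lam' - lambar) * (n:ℝ) ≤ (lam' - lambar) * K := by nlinarith
      have h8 : Real.exp (lam' * n) = Real.exp ((lam' - lambar) * n) * Real.exp (lambar * n) := by
        rw [← Real.exp_add]; ring_nf
      rw [h8]
      have h9 := Real.exp_le_exp.2 h7
      nlinarith [Real.exp_pos (lam' * K), Real.exp_pos (lambar * (n:ℝ)),
        Real.exp_pos ((lam'-lambar)*(n:ℝ))]
  have hmnhit : Measurable fun ω => ENNReal.ofReal (Real.exp (lambar * (nhit s₀ (fun i => X i ω) : ℝ))) :=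
    ENNReal.measurable_ofReal.comp (Real.measurable_exp.comp (measurable_const.mul
      (measurable_from_nat.comp ((measurable_nhit s₀).comp hmZ))))
  have hρ' : (∫⁻ ω, ENNReal.ofReal (Real.exp (lam' * (nhit s₀ (fun i => X i ω) : ℝ))) ∂P)
      ≤ ENNReal.ofReal (1 + δ) := by
    have hstep : ∀ ω, ENNReal.ofReal (Real.exp (lam' * (nhit s₀ (fun i => X i ω) : ℝ)))
        ≤ ENNReal.ofReal (Real.exp (lam' * K)) + ENNReal.ofReal (Real.exp ((lam' - lambar) * K))
            * ENNReal.ofReal (Real.exp (lambar * (nhit s₀ (fun i => X i ω) : ℝ))) := by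
      intro ω
      rw [← ENNReal.ofReal_mul (Real.exp_pos _).le,
        ← ENNReal.ofReal_add (Real.exp_pos _).le (by positivity)]
      exact ENNReal.ofReal_le_ofReal (hpoint _)
    calc (∫⁻ ω, ENNReal.ofReal (Real.exp (lam' * (nhit s₀ (fun i => X i ω) : ℝ))) ∂P)
        ≤ ∫⁻ ω, ENNReal.ofReal (Real.exp (lam' * K)) + ENNReal.ofReal (Real.exp ((lam' - lambar) * K))
            * ENNReal.ofReal (Real.exp (lambar * (nhit s₀ (fun i => X i ω) : ℝ))) ∂P :=
          lintegral_mono hstep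
      _ = ENNReal.ofReal (Real.exp (lam' * K))
          + ENNReal.ofReal (Real.exp ((lam' - lambar) * K)) * ρbar := by
          rw [lintegral_add_left measurable_const, lintegral_const_mul _ hmnhit,
            lintegral_const, measure_univ, mul_one, hρbar]
      _ ≤ ENNReal.ofReal (1 + δ/2) + ENNReal.ofReal (δ/2) := by
          refine add_le_add (ENNReal.ofReal_le_ofReal hexpK) ?_
          rw [hρbar_eq, ← ENNReal.ofReal_mul (Real.exp_pos _).le]
          exact ENNReal.ofReal_le_ofReal (by nlinarith [hexpK2, Real.exp_pos ((lam'-lambar)*K)])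
      _ = ENNReal.ofReal (1 + δ) := by
          rw [← ENNReal.ofReal_add (by positivity) (by positivity)]
          ring_nf
  -- geometric series setup
  set A : ℝ≥0∞ := ENNReal.ofReal (1 + δ) with hAdef
  set q1 : ℝ≥0∞ := ENNReal.ofReal β with hq1def
  set q : ℝ≥0∞ := ENNReal.ofReal (β * (1 + δ)) with hqdef
  have hq1A : q1 * A = q := by rw [hq1def, hAdef, hqdef, ← ENNReal.ofReal_mul hβ0.le]
  have hqlt : q < 1 := by
    rw [hqdef, ← ENNReal.ofReal_one]
    exact (ENNReal.ofReal_lt_ofReal_iff one_pos).2 hq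
  set C : ℝ≥0∞ := ENNReal.ofReal (max 1 c₀) with hCdef
  have hC1 : 1 ≤ C := by
    rw [hCdef, ← ENNReal.ofReal_one]
    exact ENNReal.ofReal_le_ofReal (le_max_left _ _)
  -- index intervals
  set I : ℕ → Set ℝ := fun j =>
    if j = 0 then Set.Iic s₀ else Set.Ioc ((j:ℝ) * s₀) (((j:ℝ)+1) * s₀) with hIdef
  have hImeas : ∀ j, MeasurableSet (I j) := by
    intro j
    rw [hIdef]
    by_cases h : j = 0 <;> simp [h]
  set φ : ℕ → ℝ → ℝ≥0∞ := fun j r => (I j).indicator (fun _ => (1:ℝ≥0∞)) r with hφdef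
  have hmφ : ∀ j, Measurable (φ j) := fun j => measurable_const.indicator (hImeas j)
  set ψ : ℕ → (ℕ → ℝ) → ℝ≥0∞ :=
    fun j x => ENNReal.ofReal (Real.exp (lam' * (tau s₀ (j+1) x : ℝ))) with hψdef
  have hmψ : ∀ j, Measurable (ψ j) := fun j =>
    ENNReal.measurable_ofReal.comp (Real.measurable_exp.comp (measurable_const.mul
      (measurable_from_nat.comp (measurable_tau s₀ (j+1)))))
  -- almost-everywhere goodness
  have haegood : ∀ᵐ ω ∂P, ∀ k, Good s₀ k (fun i => X i ω) := by
    rw [ae_all_iff]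
    intro k
    have h := good_null P X hmeas hindep hident s₀ hfull k
    exact ae_iff.2 h
  -- pointwise domination
  have hdom : ∀ᵐ ω ∂P, pass lam' (ξ ω) (fun i => X i ω)
      ≤ ∑' j, φ j (ξ ω) * ψ j (fun i => X i ω) := by
    filter_upwards [haegood] with ω hg
    obtain ⟨n0, hn0⟩ := exists_nat_ge (ξ ω / s₀)
    have hex : ∃ j : ℕ, ξ ω ≤ ((j:ℝ)+1) * s₀ := by
      refine ⟨n0, ?_⟩
      have := (div_le_iff₀ hs₀).1 hn0
      nlinarith
    set j := Nat.find hex with hjdef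
    have hj1 : ξ ω ≤ ((j:ℝ)+1) * s₀ := Nat.find_spec hex
    have hmem : ξ ω ∈ I j := by
      simp only [hIdef]
      by_cases h0 : j = 0
      · rw [if_pos h0]
        rw [h0] at hj1
        simpa using hj1
      · rw [if_neg h0]
        refine ⟨?_, hj1⟩
        by_contra hle
        push_neg at hle
        obtain ⟨j', hj'⟩ : ∃ j', j = j' + 1 := ⟨j-1, by omega⟩
        have hmin := Nat.find_min hex (show j' < j by omega)
        apply hmin
        have : ((j':ℝ)+1) = (j:ℝ) := by rw [hj']; push_cast; ring
        rw [this]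
        exact hle
    have hgood : Good s₀ (j+1) (fun i => X i ω) := hg (j+1)
    have hdrop := tau_drop hgood
    have htau1 : 1 ≤ tau s₀ (j+1) (fun i => X i ω) :=
      le_trans (by omega) (le_tau_of_good hgood)
    have hsum : ξ ω + ∑ i ∈ Finset.range (tau s₀ (j+1) (fun i => X i ω)),
        (fun i => X i ω) (i+1) ≤ 0 := by
      push_cast at hdrop
      nlinarith
    have hhit : hits (ξ ω) (fun i => X i ω) := ⟨_, htau1, hsum⟩
    have hple : pass lam' (ξ ω) (fun i => X i ω) ≤ ψ j (fun i => X i ω) := by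
      have hv : pass lam' (ξ ω) (fun i => X i ω)
          = ENNReal.ofReal (Real.exp (lam' * (Nat.find hhit : ℝ))) := dif_pos hhit
      rw [hv]
      simp only [hψdef]
      have hfle : Nat.find hhit ≤ tau s₀ (j+1) (fun i => X i ω) := Nat.find_le ⟨htau1, hsum⟩
      refine ENNReal.ofReal_le_ofReal (Real.exp_le_exp.2 (mul_le_mul_of_nonneg_left ?_ hlam'.le))
      exact_mod_cast hfle
    calc pass lam' (ξ ω) (fun i => X i ω) ≤ φ j (ξ ω) * ψ j (fun i => X i ω) := by
          simp only [hφdef]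
          simp only [Set.indicator_of_mem hmem]
          rw [one_mul]
          exact hple
      _ ≤ ∑' j', φ j' (ξ ω) * ψ j' (fun i => X i ω) := ENNReal.le_tsum j
  -- per-term bound
  have hperj : ∀ j, ∫⁻ ω, φ j (ξ ω) * ψ j (fun i => X i ω) ∂P ≤ (C * q1^j) * A^(j+1) := by
    intro j
    have hIndep : IndepFun (fun ω => φ j (ξ ω)) (fun ω => ψ j (fun i => X i ω)) P :=
      hξindep.comp (hmφ j) (hmψ j)
    rw [show (∫⁻ ω, φ j (ξ ω) * ψ j (fun i => X i ω) ∂P)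
        = ∫⁻ ω, ((fun ω => φ j (ξ ω)) * (fun ω => ψ j (fun i => X i ω))) ω ∂P from
        lintegral_congr fun ω => rfl,
      lintegral_mul_eq_lintegral_mul_lintegral_of_indepFun
        (show Measurable fun ω => φ j (ξ ω) from (hmφ j).comp hξmeas)
        (show Measurable fun ω => ψ j (fun i => X i ω) from (hmψ j).comp hmZ) hIndep]
    have h1 : ∫⁻ ω, φ j (ξ ω) ∂P ≤ C * q1 ^ j := by
      have heq : (fun ω => φ j (ξ ω)) = (ξ ⁻¹' I j).indicator (fun _ => (1:ℝ≥0∞)) := by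
        funext ω
        simp only [hφdef]
        by_cases hω : ξ ω ∈ I j
        · rw [Set.indicator_of_mem hω, Set.indicator_of_mem (Set.mem_preimage.2 hω)]
        · rw [Set.indicator_of_notMem hω,
            Set.indicator_of_notMem (fun hc => hω (Set.mem_preimage.1 hc))]
      rw [show (∫⁻ ω, φ j (ξ ω) ∂P) = ∫⁻ ω, (ξ ⁻¹' I j).indicator (fun _ => (1:ℝ≥0∞)) ω ∂P from
          lintegral_congr fun ω => by rw [← heq],
        lintegral_indicator_const (hξmeas (hImeas j)) 1, one_mul]
      rcases Nat.eq_zero_or_pos j with h0 | hpos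
      · subst h0
        simp only [pow_zero, mul_one]
        exact le_trans prob_le_one hC1
      · have hsub : ξ ⁻¹' I j ⊆ {ω | (j:ℝ) * s₀ < ξ ω} := by
          intro ω hω
          rw [Set.mem_preimage] at hω
          simp only [hIdef] at hω
          rw [if_neg (Nat.pos_iff_ne_zero.1 hpos)] at hω
          exact hω.1
        refine le_trans (measure_mono hsub) (le_trans (htail ((j:ℝ)*s₀) (by positivity)) ?_)
        have hrw : c₁ ^ ((j:ℝ) * s₀) = β ^ j := by
          rw [mul_comm, Real.rpow_mul hc₁.1.le, ← hβdef, Real.rpow_natCast]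
        rw [hrw, ENNReal.ofReal_mul hc₀.le, ENNReal.ofReal_pow hβ0.le, ← hq1def]
        exact mul_le_mul_left (ENNReal.ofReal_le_ofReal (le_max_right 1 c₀)) _
    have h2 : ∫⁻ ω, ψ j (fun i => X i ω) ∂P ≤ A^(j+1) := by
      calc ∫⁻ ω, ψ j (fun i => X i ω) ∂P
          ≤ (∫⁻ ω, ENNReal.ofReal (Real.exp (lam' * (nhit s₀ (fun i => X i ω) : ℝ))) ∂P) ^ (j+1) :=
            tau_pow_bound P X hmeas hindep hident s₀ lam' hfull (j+1)
        _ ≤ A^(j+1) := pow_le_pow_left' hρ' _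
    exact mul_le_mul' h1 h2
  -- put it together
  have hfinal : ∫⁻ ω, pass lam' (ξ ω) (fun i => X i ω) ∂P
      ≤ (C * A) * (1 - q)⁻¹ := by
    calc ∫⁻ ω, pass lam' (ξ ω) (fun i => X i ω) ∂P
        ≤ ∫⁻ ω, ∑' j, φ j (ξ ω) * ψ j (fun i => X i ω) ∂P := lintegral_mono_ae hdom
      _ = ∑' j, ∫⁻ ω, φ j (ξ ω) * ψ j (fun i => X i ω) ∂P :=
          lintegral_tsum fun j => (((hmφ j).comp hξmeas).mul ((hmψ j).comp hmZ)).aemeasurable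
      _ ≤ ∑' j, (C * q1^j) * A^(j+1) := ENNReal.tsum_le_tsum hperj
      _ = ∑' j, (C * A) * q^j := by
          refine tsum_congr fun j => ?_
          rw [← hq1A, pow_succ, mul_pow]
          ring
      _ = (C * A) * ∑' j, q^j := ENNReal.tsum_mul_left
      _ = (C * A) * (1 - q)⁻¹ := by rw [ENNReal.tsum_geometric]
  have hrwgoal : (∫⁻ ω, expPassage lam' (fun n ω => ∑ i ∈ Finset.range n, X (i + 1) ω) (ξ ω) ω ∂P)
      = ∫⁻ ω, pass lam' (ξ ω) (fun i => X i ω) ∂P := lintegral_congr fun ω => rfl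
  rw [hrwgoal]
  refine lt_of_le_of_lt hfinal ?_
  refine ENNReal.mul_lt_top (ENNReal.mul_lt_top ?_ ?_) ?_
  · exact ENNReal.ofReal_lt_top
  · exact ENNReal.ofReal_lt_top
  · exact ENNReal.inv_lt_top.2 (tsub_pos_of_lt hqlt)
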